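/- Let f : {0,1}^m → {0,1}^n be an adjacency-preserving map (strictly increasing and taking pairs at Hamming distance 1 to pairs at Hamming distance 1). Then f is a (possibly empty) composite of face maps δ_i^α and symmetry maps σ_i if and only if f is injective. -/

import Mathlib

/-- An adjacency-preserving map between cubes: strictly increasing (for the
product order) and taking pairs at Hamming distance 1 to pairs at Hamming
distance 1. -/
def AdjPreserving {m n : ℕ} (f : (Fin m → Bool) → (Fin n → Bool)) : Prop :=
  StrictMono f ∧ ∀ ε ε' : Fin m → Bool,
    hammingDist ε ε' = 1 → hammingDist (f ε) (f ε') = 1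

/-- Evaluation of a "generalized index" in `{1,…,m} ∪ {−∞,+∞}` (encoded as
`Fin m ⊕ Bool`, with `Sum.inr false = −∞` and `Sum.inr true = +∞`) on a vertex
`ε ∈ {0,1}^m`, with the conventions `ε_{−∞} = 0` and `ε_{+∞} = 1`. -/
def evalIdx {m : ℕ} (ε : Fin m → Bool) : Fin m ⊕ Bool → Bool :=
  Sum.elim ε id

/-- The maps `{0,1}^m → {0,1}^n` that are (possibly empty) composites of face
maps `δ_i^α` (insertion of the value `α` at position `i`) and symmetry maps
`σ_i` (exchange of two adjacent coordinates `i` and `i+1`). -/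
inductive IsCubeMap : (m n : ℕ) → ((Fin m → Bool) → (Fin n → Bool)) → Prop
  | id (m : ℕ) : IsCubeMap m m (fun x => x)
  | face {m n : ℕ} (i : Fin (n + 1)) (b : Bool)
      {f : (Fin m → Bool) → (Fin n → Bool)} :
      IsCubeMap m n f → IsCubeMap m (n + 1) (fun x => i.insertNth b (f x))
  | symm {m n : ℕ} (i j : Fin n) (hij : (j : ℕ) = (i : ℕ) + 1)
      {f : (Fin m → Bool) → (Fin n → Bool)} :
      IsCubeMap m n f → IsCubeMap m n (fun x k => f x (Equiv.swap i j k))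

-- closure under precomposition of output coordinates by a permutation
lemma cubeMap_perm {m n : ℕ} {f : (Fin m → Bool) → (Fin n → Bool)}
    (hf : IsCubeMap m n f) (π : Equiv.Perm (Fin n)) :
    IsCubeMap m n (fun x k => f x (π k)) := by
  cases n with
  | zero =>
    have : (fun x k => f x (π k)) = f := by
      funext x k; exact k.elim0
    rw [this]; exact hf
  | succ n =>
    have h := Equiv.Perm.mclosure_swap_castSucc_succ n
    have hπ : π ∈ Submonoid.closure
        (Set.range fun i : Fin n => Equiv.swap i.castSucc i.succ) := by
      rw [h]; trivial
    have key : ∀ (f : (Fin m → Bool) → (Fin (n+1) → Bool)),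
        IsCubeMap m (n+1) f → IsCubeMap m (n+1) (fun x k => f x (π k)) :=
      Submonoid.closure_induction
      (motive := fun π _ => ∀ (f : (Fin m → Bool) → (Fin (n+1) → Bool)),
        IsCubeMap m (n+1) f → IsCubeMap m (n+1) (fun x k => f x (π k)))
      ?mem ?one ?mul hπ
    case _ => exact key f hf
    case mem => rintro π ⟨i, rfl⟩ f hf
                exact IsCubeMap.symm i.castSucc i.succ (by simp) hf
    case one => intro f hf; exact hf
    case mul =>
      intro a b _ _ ha hb f hf
      exact hb _ (ha f hf)

lemma isCubeMap_of_eval : ∀ (n : ℕ) {m : ℕ} (g : Fin n → Fin m ⊕ Bool),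
    (∀ i : Fin m, ∃! k, g k = Sum.inl i) →
    IsCubeMap m n (fun ε k => evalIdx ε (g k)) := by
  intro n
  induction n with
  | zero =>
    intro m g hg
    rcases Nat.eq_zero_or_pos m with rfl | hm
    · have : (fun (ε : Fin 0 → Bool) (k : Fin 0) => evalIdx ε (g k)) = fun x => x := by
        funext ε k; exact k.elim0
      rw [this]; exact IsCubeMap.id 0
    · exact ((hg ⟨0, hm⟩).exists.choose).elim0
  | succ n IH =>
    intro m g hg
    by_cases hinr : ∃ k b, g k = Sum.inr b
    · obtain ⟨k0, b, hk0⟩ := hinr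
      set π : Equiv.Perm (Fin (n+1)) := Equiv.swap k0 (Fin.last n) with hπ
      set g' : Fin (n+1) → Fin m ⊕ Bool := fun k => g (π k) with hg'
      have hg'last : g' (Fin.last n) = Sum.inr b := by
        simp [hg', hπ, Equiv.swap_apply_right, hk0]
      have hg'u : ∀ i : Fin m, ∃! k, g' k = Sum.inl i := by
        intro i
        obtain ⟨k, hk, hk'⟩ := hg i
        refine ⟨π.symm k, by simp [hg']; exact hk, ?_⟩
        intro y hy
        have := hk' (π y) hy
        rw [← this]; simp
      set g'' : Fin n → Fin m ⊕ Bool := fun k => g' k.castSucc with hg''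
      have hg''u : ∀ i : Fin m, ∃! k, g'' k = Sum.inl i := by
        intro i
        obtain ⟨k, hk, hk'⟩ := hg'u i
        have hkne : k ≠ Fin.last n := by
          intro h; rw [h, hg'last] at hk; exact absurd hk (by simp)
        obtain ⟨j, rfl⟩ := Fin.exists_castSucc_eq.mpr hkne
        refine ⟨j, hk, ?_⟩
        intro y hy
        exact Fin.castSucc_injective n (hk' y.castSucc hy)
      have hF := IH g'' hg''u
      have hface := IsCubeMap.face (Fin.last n) b hF
      have heq : (fun x => (Fin.last n).insertNth b ((fun ε k => evalIdx ε (g'' k)) x))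
          = fun ε k => evalIdx ε (g' k) := by
        funext ε k
        rw [Fin.insertNth_last']
        induction k using Fin.lastCases with
        | last => rw [Fin.snoc_last, hg'last]; rfl
        | cast j => rw [Fin.snoc_castSucc]
      rw [heq] at hface
      have := cubeMap_perm hface π
      have heq2 : (fun x k => (fun ε k => evalIdx ε (g' k)) x (π k))
          = fun ε k => evalIdx ε (g k) := by
        funext ε k
        simp [hg', hπ]
      rw [heq2] at this
      exact this
    · push_neg at hinr
      have hall : ∀ k, ∃ i, g k = Sum.inl i := by
        intro k
        cases h : g k with
        | inl i => exact ⟨i, rfl⟩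
        | inr b => exact absurd h (hinr k b)
      choose t ht using hall
      have htinj : Function.Injective t := by
        intro k k' h
        obtain ⟨kk, _, hk'⟩ := hg (t k)
        rw [hk' k (ht k), hk' k' (show g k' = Sum.inl (t k) by rw [ht k', h])]
      have htsurj : Function.Surjective t := by
        intro i
        obtain ⟨k, hk, _⟩ := hg i
        refine ⟨k, ?_⟩
        have := ht k; rw [hk] at this; exact (Sum.inl.injEq _ _).mp this.symm
      have hbij : Function.Bijective t := ⟨htinj, htsurj⟩
      have hcard : n + 1 = m := by
        have := Fintype.card_of_bijective hbij
        simpa using this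
      subst hcard
      have := cubeMap_perm (IsCubeMap.id (n+1)) (Equiv.ofBijective t hbij)
      have heq : (fun (x : Fin (n+1) → Bool) k => (fun y => y) x ((Equiv.ofBijective t hbij) k))
          = fun ε k => evalIdx ε (g k) := by
        funext ε k
        rw [ht k]
        rfl
      rw [heq] at this
      exact this

lemma injective_of_isCubeMap {m n : ℕ} {f : (Fin m → Bool) → (Fin n → Bool)}
    (h : IsCubeMap m n f) : Function.Injective f := by
  induction h with
  | id => exact fun a b h => h
  | face i b hf IH =>
    intro x y hxy
    apply IH
    funext j
    have := congrFun hxy (i.succAbove j)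
    simpa [Fin.insertNth_apply_succAbove] using this
  | symm i j hij hf IH =>
    intro x y hxy
    apply IH
    funext k
    have := congrFun hxy (Equiv.swap i j k)
    simpa [Equiv.swap_apply_self] using this

lemma hamming_update {k : ℕ} (ε : Fin k → Bool) (i : Fin k) (b : Bool) (h : ε i ≠ b) :
    hammingDist ε (Function.update ε i b) = 1 := by
  rw [show hammingDist ε (Function.update ε i b)
      = (Finset.univ.filter fun j => ε j ≠ Function.update ε i b j).card from rfl,
    Finset.card_eq_one]
  refine ⟨i, ?_⟩
  ext j
  simp only [Finset.mem_filter, Finset.mem_univ, true_and, Finset.mem_singleton,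
    Function.update_apply]
  constructor
  · intro hj; by_contra hne; simp [hne] at hj
  · rintro rfl; simpa using h

lemma hamming_one {N : ℕ} {a b : Fin N → Bool} (h : hammingDist a b = 1) :
    ∃ k, a k ≠ b k ∧ ∀ j, j ≠ k → a j = b j := by
  rw [show hammingDist a b = (Finset.univ.filter fun j => a j ≠ b j).card from rfl,
    Finset.card_eq_one] at h
  obtain ⟨k, hk⟩ := h
  refine ⟨k, ?_, ?_⟩
  · have : k ∈ ({k} : Finset (Fin N)) := Finset.mem_singleton_self k
    rw [← hk] at this; simpa using this
  · intro j hj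
    by_contra hne
    have : j ∈ (Finset.univ.filter fun j => a j ≠ b j) := by simp [hne]
    rw [hk] at this; simp at this; exact hj this

lemma flip_step {m n : ℕ} {f : (Fin m → Bool) → (Fin n → Bool)} (hadj : AdjPreserving f)
    {ε : Fin m → Bool} {i : Fin m} (h : ε i = false) :
    ∃ k, f ε k = false ∧
      f (Function.update ε i true) = Function.update (f ε) k true := by
  have hd := hadj.2 ε (Function.update ε i true) (hamming_update ε i true (by simp [h]))
  obtain ⟨k, hk, hk'⟩ := hamming_one hd
  have hle : ε ≤ Function.update ε i true := by
    intro j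
    rcases eq_or_ne j i with rfl | hne
    · simp [h]
    · simp [Function.update_apply, hne]
  have hlt : ε < Function.update ε i true := lt_of_le_of_ne hle (fun hEq => by
    have := congrFun hEq i; simp [h] at this)
  have hfle := (hadj.1 hlt).le
  have hkk : f ε k = false ∧ f (Function.update ε i true) k = true := by
    have := hfle k
    clear hd hlt hle
    revert hk this
    generalize f ε k = a
    generalize f (Function.update ε i true) k = b
    cases a <;> cases b <;> intro hne hle <;>
      first
        | exact absurd rfl hne
        | exact ⟨rfl, rfl⟩
        | exact absurd hle (by simp)
  refine ⟨k, hkk.1, ?_⟩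
  funext j
  rcases eq_or_ne j k with rfl | hj
  · simp [hkk.2]
  · rw [Function.update_apply, if_neg hj]
    exact (hk' j hj).symm

lemma card_update_lt {m : ℕ} (ε : Fin m → Bool) (j : Fin m) (hj : ε j = true) :
    (Finset.univ.filter fun l => Function.update ε j false l = true).card + 1
      ≤ (Finset.univ.filter fun l => ε l = true).card := by
  have hset : (Finset.univ.filter fun l => Function.update ε j false l = true)
      = (Finset.univ.filter fun l => ε l = true).erase j := by
    ext l
    simp only [Finset.mem_filter, Finset.mem_univ, true_and, Finset.mem_erase,
      Function.update_apply]
    rcases eq_or_ne l j with rfl | hl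
    · simp
    · simp [hl]
  rw [hset, Finset.card_erase_of_mem (by simp [hj])]
  have hpos : 0 < (Finset.univ.filter fun l => ε l = true).card :=
    Finset.card_pos.mpr ⟨j, by simp [hj]⟩
  omega

lemma flip_unique {N : ℕ} {a : Fin N → Bool} {k k' : Fin N}
    (h1 : a k = false)
    (h : Function.update a k true = Function.update a k' true) : k = k' := by
  by_contra hne
  have := congrFun h k
  rw [Function.update_self, Function.update_apply, if_neg hne, h1] at this
  exact Bool.noConfusion this

lemma exists_eval {m n : ℕ} {f : (Fin m → Bool) → (Fin n → Bool)}
    (hadj : AdjPreserving f) (hinj : Function.Injective f) :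
    ∃ g : Fin n → Fin m ⊕ Bool, (∀ i, ∃! k, g k = Sum.inl i) ∧
      f = fun ε k => evalIdx ε (g k) := by
  classical
  choose K hK1 hK2 using fun (ε : Fin m → Bool) (i : Fin m) (h : ε i = false) =>
    flip_step hadj h
  have Kcongr : ∀ {ε ε' : Fin m → Bool} (_ : ε = ε') (i : Fin m)
      (h1 : ε i = false) (h2 : ε' i = false), K ε i h1 = K ε' i h2 := by
    rintro ε _ rfl i h1 h2; rfl
  -- the square lemma
  have square : ∀ (ε : Fin m → Bool) (i j : Fin m) (hij : i ≠ j)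
      (hi : ε i = false) (hj : ε j = false)
      (hi2 : Function.update ε j true i = false),
      K ε i hi ≠ K ε j hj ∧ K (Function.update ε j true) i hi2 = K ε i hi := by
    intro ε i j hij hi hj hi2
    have hj1 : Function.update ε i true j = false := by
      rw [Function.update_apply, if_neg (Ne.symm hij)]; exact hj
    set k1 := K ε i hi with hk1
    set k2 := K ε j hj with hk2
    set k3 := K (Function.update ε i true) j hj1 with hk3
    set k4 := K (Function.update ε j true) i hi2 with hk4
    have e1 : f (Function.update ε i true) = Function.update (f ε) k1 true := hK2 ε i hi
    have e2 : f (Function.update ε j true) = Function.update (f ε) k2 true := hK2 ε j hj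
    have e3 : f (Function.update (Function.update ε i true) j true)
        = Function.update (Function.update (f ε) k1 true) k3 true := by
      rw [hK2 _ j hj1, e1]
    have e4 : f (Function.update (Function.update ε j true) i true)
        = Function.update (Function.update (f ε) k2 true) k4 true := by
      rw [hK2 _ i hi2, e2]
    have hcomm : Function.update (Function.update ε i true) j true
        = Function.update (Function.update ε j true) i true :=
      Function.update_comm hij true true ε
    have hE : Function.update (Function.update (f ε) k1 true) k3 true
        = Function.update (Function.update (f ε) k2 true) k4 true := by
      rw [← e3, ← e4, hcomm]
    have a1 : f ε k1 = false := hK1 ε i hi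
    have a2 : f ε k2 = false := hK1 ε j hj
    have h3 : Function.update (f ε) k1 true k3 = false := by
      rw [← e1]; exact hK1 _ j hj1
    have k3k1 : k3 ≠ k1 := by
      intro hEq; rw [hEq, Function.update_self] at h3; exact Bool.noConfusion h3
    have a3 : f ε k3 = false := by
      rwa [Function.update_apply, if_neg k3k1] at h3
    have k1k2 : k1 ≠ k2 := by
      intro hEq
      have : f (Function.update ε i true) = f (Function.update ε j true) := by
        rw [e1, e2, hEq]
      have heps := hinj this
      have := congrFun heps i
      rw [Function.update_self, Function.update_apply, if_neg hij, hi] at this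
      exact Bool.noConfusion this
    refine ⟨k1k2, ?_⟩
    -- evaluate hE at k1 to get k1 = k4
    have hv := congrFun hE k1
    rw [Function.update_apply, if_neg (Ne.symm k3k1), Function.update_self] at hv
    by_contra hne
    rw [Function.update_apply, if_neg (Ne.symm hne),
      Function.update_apply, if_neg k1k2, a1] at hv
    exact Bool.noConfusion hv.symm
  set bot : Fin m → Bool := fun _ => false with hbotdef
  have hboti : ∀ i : Fin m, bot i = false := fun _ => rfl
  -- constancy of K in the base point
  have Kconst : ∀ (N : ℕ) (ε : Fin m → Bool) (i : Fin m) (h : ε i = false),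
      (Finset.univ.filter fun l => ε l = true).card ≤ N → K ε i h = K bot i (hboti i) := by
    intro N
    induction N with
    | zero =>
      intro ε i h hcard
      have hzero : ε = bot := by
        funext l
        by_contra hl
        have hl' : ε l = true := by
          cases hE : ε l
          · exact absurd hE hl
          · rfl
        have : l ∈ (Finset.univ.filter fun l => ε l = true) := by simp [hl']
        have := Finset.card_pos.mpr ⟨l, this⟩
        omega
      exact Kcongr hzero i h (hboti i)
    | succ N IHN =>
      intro ε i h hcard
      by_cases hz : ∀ l, ε l = false
      · exact Kcongr (funext hz) i h (hboti i)
      · push_neg at hz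
        obtain ⟨j, hj⟩ := hz
        have hjt : ε j = true := by
          cases hE : ε j
          · exact absurd hE hj
          · rfl
        have hij : i ≠ j := by
          rintro rfl; rw [h] at hjt; exact Bool.noConfusion hjt
        set ε' := Function.update ε j false with hε'def
        have hε'i : ε' i = false := by
          rw [hε'def, Function.update_apply, if_neg hij]; exact h
        have hε'j : ε' j = false := by rw [hε'def, Function.update_self]
        have hup : Function.update ε' j true = ε := by
          funext l
          rcases eq_or_ne l j with rfl | hl
          · rw [Function.update_self, hjt]
          · rw [Function.update_apply, if_neg hl, hε'def,
              Function.update_apply, if_neg hl]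
        have hupi : Function.update ε' j true i = false := by rw [hup]; exact h
        have hsq := (square ε' i j hij hε'i hε'j hupi).2
        have hKe : K ε i h = K (Function.update ε' j true) i hupi :=
          Kcongr hup.symm i h hupi
        rw [hKe, hsq]
        apply IHN
        have := card_update_lt ε j hjt
        rw [← hε'def] at this
        omega
  have Kconst' : ∀ (ε : Fin m → Bool) (i : Fin m) (h : ε i = false),
      K ε i h = K bot i (hboti i) :=
    fun ε i h => Kconst _ ε i h le_rfl
  set kk : Fin m → Fin n := fun i => K bot i (hboti i) with hkkdef
  have kkinj : Function.Injective kk := by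
    intro i j hEq
    by_contra hne
    exact (square bot i j hne (hboti i) (hboti j)
      (by rw [Function.update_apply, if_neg hne])).1 hEq
  set g : Fin n → Fin m ⊕ Bool :=
    fun k => if h : ∃ i, kk i = k then Sum.inl h.choose else Sum.inr (f bot k)
    with hgdef
  have hgkk : ∀ i : Fin m, g (kk i) = Sum.inl i := by
    intro i
    have hex : ∃ i', kk i' = kk i := ⟨i, rfl⟩
    rw [hgdef]
    simp only [dif_pos hex]
    exact congrArg Sum.inl (kkinj hex.choose_spec)
  have hfbot : ∀ k, f bot k = evalIdx bot (g k) := by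
    intro k
    rw [hgdef]
    by_cases hk : ∃ i, kk i = k
    · simp only [dif_pos hk]
      have hv : f bot (kk hk.choose) = false := hK1 bot hk.choose (hboti hk.choose)
      calc f bot k = f bot (kk hk.choose) := by rw [hk.choose_spec]
        _ = false := hv
        _ = evalIdx bot (Sum.inl hk.choose) := rfl
    · simp only [dif_neg hk]; rfl
  have main : ∀ (N : ℕ) (ε : Fin m → Bool),
      (Finset.univ.filter fun l => ε l = true).card ≤ N →
      ∀ k, f ε k = evalIdx ε (g k) := by
    intro N
    induction N with
    | zero =>
      intro ε hcard k
      have hzero : ε = bot := by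
        funext l
        by_contra hl
        have hl' : ε l = true := by
          cases hE : ε l
          · exact absurd hE hl
          · rfl
        have : l ∈ (Finset.univ.filter fun l => ε l = true) := by simp [hl']
        have := Finset.card_pos.mpr ⟨l, this⟩
        omega
      rw [hzero]; exact hfbot k
    | succ N IHN =>
      intro ε hcard k
      by_cases hz : ∀ l, ε l = false
      · rw [funext hz]; exact hfbot k
      · push_neg at hz
        obtain ⟨j, hj⟩ := hz
        have hjt : ε j = true := by
          cases hE : ε j
          · exact absurd hE hj
          · rfl
        set ε' := Function.update ε j false with hε'def
        have hε'j : ε' j = false := by rw [hε'def, Function.update_self]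
        have hup : Function.update ε' j true = ε := by
          funext l
          rcases eq_or_ne l j with rfl | hl
          · rw [Function.update_self, hjt]
          · rw [Function.update_apply, if_neg hl, hε'def,
              Function.update_apply, if_neg hl]
        have hstep : f ε = Function.update (f ε') (kk j) true := by
          rw [← hup, hK2 ε' j hε'j, Kconst' ε' j hε'j]
        have hcard' : (Finset.univ.filter fun l => ε' l = true).card ≤ N := by
          have := card_update_lt ε j hjt
          rw [← hε'def] at this
          omega
        rw [hstep]
        rcases eq_or_ne k (kk j) with rfl | hk
        · rw [Function.update_self, hgkk j]
          show true = ε j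
          rw [hjt]
        · rw [Function.update_apply, if_neg hk, IHN ε' hcard' k]
          rw [hgdef]
          by_cases hkex : ∃ i, kk i = k
          · simp only [dif_pos hkex]
            have hcj : hkex.choose ≠ j := by
              intro hEq
              rw [← hkex.choose_spec, hEq] at hk
              exact hk rfl
            show ε' hkex.choose = ε hkex.choose
            rw [hε'def, Function.update_apply, if_neg hcj]
          · simp only [dif_neg hkex]; rfl
  refine ⟨g, ?_, ?_⟩
  · intro i
    refine ⟨kk i, hgkk i, ?_⟩
    intro k hk
    replace hk : (if h : ∃ i', kk i' = k then Sum.inl h.choose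
        else Sum.inr (f bot k)) = Sum.inl i := hk
    by_cases hkex : ∃ i', kk i' = k
    · rw [dif_pos hkex] at hk
      have : hkex.choose = i := Sum.inl.injEq _ _ ▸ (by injection hk)
      rw [← hkex.choose_spec, this]
    · rw [dif_neg hkex] at hk
      exact absurd hk (by simp)
  · funext ε k
    exact main _ ε le_rfl k

/-- An adjacency-preserving map `f : {0,1}^m → {0,1}^n` is a composite of face
maps and symmetry maps if and only if it is injective. -/
theorem isCubeMap_iff_injective (m n : ℕ) (f : (Fin m → Bool) → (Fin n → Bool))
    (hadj : AdjPreserving f) :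
    IsCubeMap m n f ↔ Function.Injective f := by
  constructor
  · exact injective_of_isCubeMap
  · intro hinj
    obtain ⟨g, hg, hf⟩ := exists_eval hadj hinj
    rw [hf]
    exact isCubeMap_of_eval n g hg
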